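/- For every positive integer n, the central binomial coefficient satisfies C(2n, n) ≤ (4^n / √(π n)) · exp(23/(36n)). -/

import Mathlib

open scoped Topology

open Real Stirling Filter Nat in
private lemma aux_s_lower (n : ℕ) (hn : 0 < n) : Real.sqrt Real.pi ≤ stirlingSeq n := by
  obtain ⟨m, rfl⟩ := Nat.exists_eq_succ_of_ne_zero hn.ne'
  have h : Filter.Tendsto (stirlingSeq ∘ Nat.succ) atTop (𝓝 (Real.sqrt Real.pi)) :=
    tendsto_stirlingSeq_sqrt_pi.comp (tendsto_add_atTop_nat 1)
  exact stirlingSeq'_antitone.le_of_tendsto h m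

open Real Stirling Filter in
private lemma aux_s_diff (k : ℕ) (hk : 1 ≤ k) (p : ℕ) :
    Real.log (stirlingSeq (k + 1)) - Real.log (stirlingSeq (k + 1 + p)) ≤
      1 / 4 * (1 / k - 1 / (k + p) : ℝ) := by
  induction p with
  | zero => simp
  | succ p ih =>
    have h2 := log_stirlingSeq_sub_log_stirlingSeq_succ (k + p + 1)
    have hkp : (1 : ℝ) ≤ (k : ℝ) := by exact_mod_cast hk
    have hp : (0 : ℝ) ≤ (p : ℝ) := Nat.cast_nonneg p
    have ha1 : (1 : ℝ) ≤ (k : ℝ) + p := by linarith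
    have key : (1 : ℝ) / (4 * ((k : ℝ) + p + 1) ^ 2) ≤
        1 / 4 * (1 / ((k : ℝ) + p) - 1 / ((k : ℝ) + p + 1)) := by
      have h : (1 : ℝ) / 4 * (1 / ((k : ℝ) + p) - 1 / ((k : ℝ) + p + 1)) =
          1 / (4 * (((k : ℝ) + p) * ((k : ℝ) + p + 1))) := by
        rw [eq_div_iff (by nlinarith)]
        field_simp
        ring
      rw [h, div_le_div_iff₀ (by nlinarith) (by nlinarith)]
      nlinarith
    have heq : k + 1 + (p + 1) = (k + p) + 2 := by omega
    have heq2 : k + 1 + p = (k + p) + 1 := by omega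
    rw [heq]
    rw [heq2] at ih
    push_cast at h2 ⊢
    ring_nf at key h2 ih ⊢
    linarith

open Real Stirling Filter in
private lemma aux_s_upper (k : ℕ) (hk : 1 ≤ k) :
    stirlingSeq (k + 1) ≤ Real.sqrt Real.pi * Real.exp (1 / (4 * k)) := by
  have hkR : (1 : ℝ) ≤ (k : ℝ) := by exact_mod_cast hk
  have hpos : 0 < stirlingSeq (k + 1) := stirlingSeq'_pos k
  have hπ : 0 < Real.sqrt Real.pi := Real.sqrt_pos.mpr Real.pi_pos
  have hb : ∀ p : ℕ, Real.log (stirlingSeq (k + 1)) - 1 / (4 * k) ≤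
      Real.log (stirlingSeq (k + 1 + p)) := by
    intro p
    have h1 := aux_s_diff k hk p
    have h2 : (1 : ℝ) / 4 * (1 / k - 1 / (k + p)) ≤ 1 / (4 * k) := by
      have hp : (0 : ℝ) ≤ (p : ℝ) := Nat.cast_nonneg p
      have h3 : (0 : ℝ) ≤ 1 / ((k : ℝ) + p) := by positivity
      rw [show (1:ℝ)/(4*k) = 1/4 * (1/k) by ring]
      nlinarith
    linarith
  have hlim : Filter.Tendsto (fun p : ℕ => Real.log (stirlingSeq (k + 1 + p))) atTop
      (𝓝 (Real.log (Real.sqrt Real.pi))) := by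
    have h1 : Filter.Tendsto (fun p : ℕ => stirlingSeq (p + (k + 1))) atTop
        (𝓝 (Real.sqrt Real.pi)) := tendsto_stirlingSeq_sqrt_pi.comp (tendsto_add_atTop_nat (k + 1))
    have h2 : Filter.Tendsto (fun p : ℕ => stirlingSeq (k + 1 + p)) atTop
        (𝓝 (Real.sqrt Real.pi)) := by simpa [add_comm] using h1
    exact h2.log hπ.ne'
  have hlog : Real.log (stirlingSeq (k + 1)) - 1 / (4 * k) ≤ Real.log (Real.sqrt Real.pi) :=
    ge_of_tendsto' hlim hb
  calc stirlingSeq (k + 1) = Real.exp (Real.log (stirlingSeq (k + 1))) := (Real.exp_log hpos).symm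
    _ ≤ Real.exp (Real.log (Real.sqrt Real.pi) + 1 / (4 * k)) := by
        apply Real.exp_le_exp.mpr; linarith
    _ = Real.sqrt Real.pi * Real.exp (1 / (4 * k)) := by
        rw [Real.exp_add, Real.exp_log hπ]

theorem stmt0 (n : ℕ) (hn : 0 < n) :
    ((2 * n).choose n : ℝ) ≤ 4 ^ n / Real.sqrt (Real.pi * n) * Real.exp (23 / (36 * n)) := by
  have hx : (0 : ℝ) < (n : ℝ) := by exact_mod_cast hn
  have hx1 : (1 : ℝ) ≤ (n : ℝ) := by exact_mod_cast hn
  set x : ℝ := (n : ℝ) with hxdef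
  set e1 : ℝ := Real.exp 1 with he1
  have he1pos : 0 < e1 := Real.exp_pos 1
  set A : ℝ := Stirling.stirlingSeq (2 * n) with hA
  set B : ℝ := Stirling.stirlingSeq n with hB
  have hApos : 0 < A := by
    have h2n : 0 < 2 * n := by omega
    obtain ⟨m, hm⟩ := Nat.exists_eq_succ_of_ne_zero h2n.ne'
    rw [hA, hm]; exact Stirling.stirlingSeq'_pos m
  have hBpos : 0 < B := by
    obtain ⟨m, hm⟩ := Nat.exists_eq_succ_of_ne_zero hn.ne'
    rw [hB, hm]; exact Stirling.stirlingSeq'_pos m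
  have hπ : 0 < Real.sqrt Real.pi := Real.sqrt_pos.mpr Real.pi_pos
  have hfac : ∀ m : ℕ, 0 < m → (Nat.factorial m : ℝ) =
      Stirling.stirlingSeq m * (Real.sqrt (2 * m) * ((m : ℝ) / e1) ^ m) := by
    intro m hm
    have hm' : (0 : ℝ) < (m : ℝ) := by exact_mod_cast hm
    rw [Stirling.stirlingSeq, div_mul_cancel₀]
    positivity
  have h1 : (Nat.factorial (2 * n) : ℝ) =
      A * (Real.sqrt (2 * (2 * x)) * ((2 * x) / e1) ^ (2 * n)) := by
    rw [hfac (2 * n) (by omega)]; push_cast; ring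
  have h2 : (Nat.factorial n : ℝ) = B * (Real.sqrt (2 * x) * (x / e1) ^ n) := hfac n hn
  have hchoose : ((2 * n).choose n : ℝ) =
      (Nat.factorial (2 * n) : ℝ) / ((Nat.factorial n : ℝ) * (Nat.factorial n : ℝ)) := by
    have h := Nat.choose_mul_factorial_mul_factorial (show n ≤ 2 * n by omega)
    have h2n : 2 * n - n = n := by omega
    rw [h2n] at h
    have h' : (2 * n).choose n * (Nat.factorial n * Nat.factorial n) = Nat.factorial (2 * n) :=
      (mul_assoc _ _ _).symm.trans h
    have hfp : (0:ℝ) < (Nat.factorial n : ℝ) := by exact_mod_cast Nat.factorial_pos n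
    have h'' : (2 * n).choose n * Nat.factorial n ^ 2 = Nat.factorial (2 * n) := by
      rw [sq]; exact h'
    field_simp
    exact_mod_cast h''
  have hsq1 : Real.sqrt (2 * (2 * x)) = 2 * Real.sqrt x := by
    rw [show (2:ℝ) * (2 * x) = 2 ^ 2 * x by ring,
      Real.sqrt_mul (by positivity), Real.sqrt_sq (by norm_num)]
  have hsq2 : Real.sqrt (2 * x) ^ 2 = 2 * x := Real.sq_sqrt (by positivity)
  have hpow1 : ((2 * x) / e1) ^ (2 * n) = 4 ^ n * (x / e1) ^ (2 * n) := by
    rw [show 2 * x / e1 = 2 * (x / e1) by ring, mul_pow,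
      show (2:ℝ) ^ (2 * n) = 4 ^ n by rw [pow_mul]; norm_num]
  have hpow2 : ((x / e1) ^ n) ^ 2 = (x / e1) ^ (2 * n) := by
    rw [← pow_mul, mul_comm]
  have hsx : 0 < Real.sqrt x := Real.sqrt_pos.mpr hx
  have hs2x : 0 < Real.sqrt (2 * x) := Real.sqrt_pos.mpr (by positivity)
  have hy : 0 < (x / e1) ^ n := by positivity
  have hx' : Real.sqrt x * Real.sqrt x = x := Real.mul_self_sqrt hx.le
  have key : ((2 * n).choose n : ℝ) = A / B ^ 2 * (4 ^ n / Real.sqrt x) := by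
    rw [hchoose, h1, h2, hsq1, hpow1,
      show B * (Real.sqrt (2 * x) * (x / e1) ^ n) * (B * (Real.sqrt (2 * x) * (x / e1) ^ n))
        = B ^ 2 * (Real.sqrt (2 * x)) ^ 2 * ((x / e1) ^ n) ^ 2 from by ring,
      hsq2, hpow2]
    field_simp
    linear_combination hx'
  set k : ℕ := 2 * n - 1 with hk
  have hk1 : 1 ≤ k := by omega
  have hkk : k + 1 = 2 * n := by omega
  have hkR : (k : ℝ) = 2 * x - 1 := by
    rw [hk, Nat.cast_sub (by omega : 1 ≤ 2 * n)]; push_cast; ring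
  have hAup : A ≤ Real.sqrt Real.pi * Real.exp (1 / (4 * k)) := by
    rw [hA, ← hkk]; exact aux_s_upper k hk1
  have hBlow : Real.sqrt Real.pi ≤ B := aux_s_lower n hn
  have hexp : Real.exp (1 / (4 * (k:ℝ))) ≤ Real.exp (23 / (36 * x)) := by
    apply Real.exp_le_exp.mpr
    rw [hkR, div_le_div_iff₀ (by nlinarith) (by positivity)]
    nlinarith
  have hstep : A / B ^ 2 ≤ Real.exp (23 / (36 * x)) / Real.sqrt Real.pi := by
    have h3 : A / B ^ 2 ≤ (Real.sqrt Real.pi * Real.exp (1 / (4 * k))) / (Real.sqrt Real.pi) ^ 2 := by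
      gcongr
    have h4 : (Real.sqrt Real.pi * Real.exp (1 / (4 * k))) / (Real.sqrt Real.pi) ^ 2
        = Real.exp (1 / (4 * k)) / Real.sqrt Real.pi := by
      rw [sq, mul_div_mul_left _ _ hπ.ne']
    rw [h4] at h3
    exact h3.trans (by gcongr)
  have hsplit : Real.sqrt (Real.pi * x) = Real.sqrt Real.pi * Real.sqrt x :=
    Real.sqrt_mul Real.pi_pos.le x
  rw [key, hsplit]
  have h5 : A / B ^ 2 * (4 ^ n / Real.sqrt x)
      ≤ Real.exp (23 / (36 * x)) / Real.sqrt Real.pi * (4 ^ n / Real.sqrt x) := by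
    gcongr
  refine h5.trans (le_of_eq ?_)
  field_simp
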